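/- For integers v ≥ 2 and m ≥ 2, the binomial coefficient satisfies C(mv, m) > l(v) · m^(-1/2) · v^(vm) / (v-1)^((v-1)m), where l(v) = (e^(15/16)/√(2π)) · ((v-1)/v)^(v-1). -/

import Mathlib

open Real

/-- The constant `l(v)` in the lower bound on the central-type binomial coefficient. -/
noncomputable def lConst (v : ℕ) : ℝ :=
  Real.exp (15/16) / Real.sqrt (2 * π) * (((v : ℝ) - 1) / (v : ℝ)) ^ (v - 1)

open Filter Finset Stirling Topology

lemma sqrt_pi_le_stirlingSeq {n : ℕ} (hn : 1 ≤ n) : Real.sqrt π ≤ stirlingSeq n := by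
  obtain ⟨k, rfl⟩ := Nat.exists_eq_add_of_le hn
  have ht : Tendsto (stirlingSeq ∘ Nat.succ) atTop (𝓝 (Real.sqrt π)) :=
    (Filter.tendsto_add_atTop_iff_nat 1).mpr tendsto_stirlingSeq_sqrt_pi
  have := Stirling.stirlingSeq'_antitone.le_of_tendsto ht k
  simpa [Function.comp, Nat.succ_eq_add_one, add_comm] using this

lemma diff_le_telescope (j : ℕ) :
    Real.log (stirlingSeq (j+1)) - Real.log (stirlingSeq (j+2)) ≤
      1/12 * (1/((j:ℝ)+1) - 1/((j:ℝ)+2)) := by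
  have hx : (0:ℝ) < 2 * ((j:ℝ)+1) + 1 := by positivity
  have hj : (0:ℝ) ≤ (j:ℝ) := Nat.cast_nonneg j
  set y : ℝ := (1 / (2 * ((j:ℝ)+1) + 1)) ^ 2 with hy
  have hy0 : 0 ≤ y := sq_nonneg _
  have hy1 : y < 1 := by
    rw [hy, one_div, inv_pow]
    exact inv_lt_one_of_one_lt₀ (one_lt_pow₀ (by nlinarith) two_ne_zero)
  have hgeo : HasSum (fun k : ℕ => (1/3 : ℝ) * y ^ (k+1)) (1/3 * (y / (1-y))) := by
    have h := (hasSum_geometric_of_lt_one hy0 hy1).mul_left ((1/3) * y)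
    have : (fun k : ℕ => (1/3) * y * y ^ k) = fun k : ℕ => (1/3 : ℝ) * y ^ (k+1) := by
      funext k; rw [pow_succ]; ring
    rw [this] at h
    rw [show (1/3:ℝ) * (y / (1-y)) = 1/3*y*(1-y)⁻¹ by ring]; exact h
  have hb : ∀ k : ℕ, (1:ℝ)/(2*(↑(k+1)) + 1) * ((1 / (2 * ((j:ℝ)+1) + 1)) ^ 2) ^ (k+1)
      ≤ (1/3) * y ^ (k+1) := by
    intro k
    rw [← hy]
    have h3 : (1:ℝ)/(2*(↑(k+1)) + 1) ≤ 1/3 := by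
      apply div_le_div_of_nonneg_left one_pos.le (by norm_num)
      push_cast; linarith [Nat.cast_nonneg (α := ℝ) k]
    exact mul_le_mul_of_nonneg_right h3 (pow_nonneg hy0 _)
  have hs := log_stirlingSeq_diff_hasSum j
  have hle : Real.log (stirlingSeq (j+1)) - Real.log (stirlingSeq (j+2)) ≤ 1/3 * (y/(1-y)) := by
    refine hasSum_le ?_ hs hgeo
    intro k
    have := hb k
    push_cast at this ⊢
    convert this using 2 <;> push_cast <;> ring
  refine hle.trans_eq ?_
  have h1 : (1:ℝ) - y ≠ 0 := by linarith
  rw [hy]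
  have hc : ((j:ℝ)+1) ≠ 0 := by positivity
  have hc2 : ((j:ℝ)+2) ≠ 0 := by positivity
  rw [div_sub_div _ _ hc hc2]
  have e1 : ∀ x y : ℝ, 1/3 * (x/y) = x/(3*y) := fun x y => by ring
  have e2 : ∀ x y : ℝ, 1/12 * (x/y) = x/(12*y) := fun x y => by ring
  rw [e1, e2, div_eq_div_iff]
  · ring_nf
    have h3 : ((3:ℝ)+(j:ℝ)*2) ≠ 0 := by positivity
    field_simp
    ring
  · have : (1:ℝ) - (1 / (2 * ((j:ℝ) + 1) + 1)) ^ 2 = 1 - y := by rw [hy]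
    rw [this]
    positivity
  · positivity

lemma log_stirlingSeq_le {n : ℕ} (hn : 1 ≤ n) :
    Real.log (stirlingSeq n) ≤ Real.log (Real.sqrt π) + 1/(12*(n:ℝ)) := by
  obtain ⟨p, rfl⟩ := Nat.exists_eq_add_of_le hn
  set f : ℕ → ℝ := fun i => Real.log (stirlingSeq (1+p+i)) with hf
  set g : ℕ → ℝ := fun i => 1/12 * (1/((1:ℝ)+(p:ℝ)+(i:ℝ))) with hg
  have key : ∀ N : ℕ, Real.log (stirlingSeq (1+p)) - 1/(12*((1:ℝ)+(p:ℝ))) ≤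
      Real.log (stirlingSeq (1+p+N)) := by
    intro N
    have h1 : ∀ i ∈ range N, f i - f (i+1) ≤ g i - g (i+1) := by
      intro i _
      rw [hf, hg]
      simp only
      have h := diff_le_telescope (p+i)
      have e1 : 1+p+i = (p+i)+1 := by omega
      have e2 : 1+p+(i+1) = (p+i)+2 := by omega
      rw [e1, e2]
      refine h.trans_eq ?_
      push_cast
      ring
    have h2 := Finset.sum_le_sum h1
    rw [Finset.sum_range_sub' f, Finset.sum_range_sub' g] at h2
    have hf0 : f 0 = Real.log (stirlingSeq (1+p)) := by rw [hf]; simp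
    have hfN : f N = Real.log (stirlingSeq (1+p+N)) := by rw [hf]
    have hg0 : g 0 = 1/(12*((1:ℝ)+(p:ℝ))) := by rw [hg]; simp only [Nat.cast_zero, add_zero, div_mul_div_comm, one_mul]
    have hgN : (0:ℝ) < g N := by rw [hg]; positivity
    rw [hf0, hfN, hg0] at h2
    linarith
  have hT : Tendsto (fun N => Real.log (stirlingSeq (1+p+N))) atTop (𝓝 (Real.log (Real.sqrt π))) := by
    have h0 : Tendsto (fun N : ℕ => 1+p+N) atTop atTop :=
      tendsto_atTop_mono (fun N => Nat.le_add_left N (1+p)) tendsto_id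
    have h1 : Tendsto (fun N => stirlingSeq (1+p+N)) atTop (𝓝 (Real.sqrt π)) :=
      tendsto_stirlingSeq_sqrt_pi.comp h0
    exact ((Real.continuousAt_log (by positivity)).tendsto.comp h1)
  have h5 := ge_of_tendsto' hT key
  have hc : ((1+p : ℕ) : ℝ) = (1:ℝ)+(p:ℝ) := by push_cast; ring
  rw [hc]
  linarith

lemma log_factorial_ge {n : ℕ} (hn : 1 ≤ n) :
    Real.log (Real.sqrt π) + 1/2 * Real.log (2*(n:ℝ)) + (n:ℝ) * Real.log ((n:ℝ) / Real.exp 1)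
      ≤ Real.log ((n.factorial : ℕ) : ℝ) := by
  have h := Stirling.log_stirlingSeq_formula n
  have h2 : Real.log (Real.sqrt π) ≤ Real.log (stirlingSeq n) := by
    have hs : (0:ℝ) < Real.sqrt π := Real.sqrt_pos.mpr pi_pos
    exact Real.log_le_log hs (sqrt_pi_le_stirlingSeq hn)
  rw [h] at h2
  linarith

lemma log_factorial_le {n : ℕ} (hn : 1 ≤ n) :
    Real.log ((n.factorial : ℕ) : ℝ) ≤ Real.log (Real.sqrt π) + 1/(12*(n:ℝ))
      + 1/2 * Real.log (2*(n:ℝ)) + (n:ℝ) * Real.log ((n:ℝ) / Real.exp 1) := by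
  have h := Stirling.log_stirlingSeq_formula n
  have h2 := log_stirlingSeq_le hn
  rw [h] at h2
  linarith

lemma key_ineq (v m : ℕ) (hv : 2 ≤ v) (hm : 2 ≤ m) :
    15/16 + 1/(12*(m:ℝ)) + 1/(12*(((v:ℝ)-1)*(m:ℝ)))
      < ((v:ℝ) - 1/2) * (Real.log (v:ℝ) - Real.log ((v:ℝ)-1)) := by
  have hv2 : (2:ℝ) ≤ (v:ℝ) := by exact_mod_cast hv
  have hm2 : (2:ℝ) ≤ (m:ℝ) := by exact_mod_cast hm
  obtain ⟨a, ha⟩ : ∃ a : ℝ, (v:ℝ) - 1 = a := ⟨_, rfl⟩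
  rw [ha]
  have ha1 : (1:ℝ) ≤ a := by rw [← ha]; linarith
  have ha0 : (0:ℝ) < a := by linarith
  have hx0 : (0:ℝ) < 2*a+1 := by linarith
  obtain ⟨x, hx⟩ : ∃ x : ℝ, 1/(2*a+1) = x := ⟨_, rfl⟩
  have hxpos : 0 < x := by rw [← hx]; positivity
  have hx3 : x ≤ 1/3 := by
    rw [← hx]
    apply div_le_div_of_nonneg_left one_pos.le (by norm_num)
    linarith
  have hlog : Real.log (v:ℝ) - Real.log a = Real.log (1 + a⁻¹) := by
    rw [← Real.log_div (by linarith : (v:ℝ) ≠ 0) ha0.ne']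
    congr 1
    have hveq : (v:ℝ) = a + 1 := by linarith
    rw [hveq]
    field_simp
  have hsum := Real.hasSum_log_one_add_inv ha0
  have hpart := sum_le_hasSum (range 3) (fun i _ => by positivity) hsum
  have hS3 : ∑ i ∈ range 3, (2:ℝ) * (1 / (2 * (i:ℝ) + 1)) * (1 / (2 * a + 1)) ^ (2 * i + 1)
      = 2*x + 2/3*x^3 + 2/5*x^5 := by
    rw [Finset.sum_range_succ, Finset.sum_range_succ, Finset.sum_range_succ,
      Finset.range_zero, Finset.sum_empty, hx]
    push_cast
    ring
  rw [show (fun i : ℕ => (2:ℝ) * (1 / (2 * (i:ℝ) + 1)) * (1 / (2 * a + 1)) ^ (2 * i + 1)) = fun i : ℕ => (2:ℝ) * (1 / (2 * (i:ℝ) + 1)) * (1 / (2 * a + 1)) ^ (2 * i + 1) from rfl] at hpart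
  rw [hS3, ← hlog] at hpart
  have hpos : (0:ℝ) ≤ a + 1/2 := by linarith
  have hstep : (a + 1/2) * (2*x + 2/3*x^3 + 2/5*x^5) ≤ (a + 1/2) * (Real.log (v:ℝ) - Real.log a) :=
    mul_le_mul_of_nonneg_left hpart hpos
  have hmain : (a + 1/2) * (2*x + 2/3*x^3 + 2/5*x^5) = 1 + 1/3*x^2 + 1/5*x^4 := by
    rw [← hx]
    field_simp
  rw [hmain] at hstep
  have hcoef : ((v:ℝ) - 1/2) = a + 1/2 := by linarith
  rw [hcoef]
  have hb1 : 1/(12*(m:ℝ)) ≤ 1/24 := by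
    apply div_le_div_of_nonneg_left one_pos.le (by norm_num)
    linarith
  have hb2 : 1/(12*(a*(m:ℝ))) ≤ 1/(24*a) := by
    apply div_le_div_of_nonneg_left one_pos.le (by positivity)
    nlinarith
  rcases le_or_gt 2 a with hc | hc
  · have hb3 : 1/(24*a) ≤ 1/48 := by
      apply div_le_div_of_nonneg_left one_pos.le (by norm_num)
      linarith
    have hq2 : 0 < x^2 := pow_pos hxpos 2
    have hq4 : 0 < x^4 := pow_pos hxpos 4
    linarith [hb2.trans hb3]
  · have haeq : a = 1 := by
      have hv3 : v < 3 := by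
        by_contra h
        push_neg at h
        have h3 : (3:ℝ) ≤ (v:ℝ) := by exact_mod_cast h
        linarith
      have hveq : v = 2 := by omega
      have : (v:ℝ) = 2 := by exact_mod_cast congrArg (Nat.cast : ℕ → ℝ) hveq
      linarith
    have hxeq : x = 1/3 := by rw [← hx, haeq]; norm_num
    have hnum : (1:ℝ) + 1/3*x^2 + 1/5*x^4 = 421/405 := by rw [hxeq]; norm_num
    rw [hnum] at hstep
    have t2 : 1/(12*(a*(m:ℝ))) ≤ 1/24 := hb2.trans (by rw [haeq]; norm_num)
    linarith

theorem binom_lower_bound (v m : ℕ) (hv : 2 ≤ v) (hm : 2 ≤ m) :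
    lConst v * (m : ℝ) ^ (-(1/2 : ℝ)) * (v : ℝ) ^ (v * m) / ((v : ℝ) - 1) ^ ((v - 1) * m) <
      ((m * v).choose m : ℝ) := by
  have hv2 : (2:ℝ) ≤ (v:ℝ) := by exact_mod_cast hv
  have hm2 : (2:ℝ) ≤ (m:ℝ) := by exact_mod_cast hm
  have hv0 : (0:ℝ) < (v:ℝ) := by linarith
  have hm0 : (0:ℝ) < (m:ℝ) := by linarith
  have hw0 : (0:ℝ) < (v:ℝ) - 1 := by linarith
  set b : ℕ := (v-1) * m with hbdef
  have hb1 : 1 ≤ b := by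
    have : 1 ≤ v - 1 := by omega
    calc 1 = 1*1 := by norm_num
    _ ≤ (v-1)*m := Nat.mul_le_mul this (by omega)
  have hm1 : 1 ≤ m := by omega
  have hmv : m ≤ m * v := Nat.le_mul_of_pos_right m (by omega)
  have hn1 : 1 ≤ m * v := le_trans hm1 hmv
  have hbm : b + m = m * v := by
    rw [hbdef]
    cases' v with v0
    · omega
    · have : v0 + 1 - 1 = v0 := by omega
      rw [this]
      ring
  have hsubb : m * v - m = b := by omega
  -- cast facts
  have hc1 : ((m*v : ℕ) : ℝ) = (m:ℝ)*(v:ℝ) := by push_cast; ring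
  have hcsub : ((v - 1 : ℕ) : ℝ) = (v:ℝ) - 1 := by
    have : (1:ℕ) ≤ v := by omega
    push_cast [Nat.cast_sub this]
    ring
  have hc2 : ((b : ℕ) : ℝ) = ((v:ℝ)-1)*(m:ℝ) := by
    rw [hbdef]
    push_cast [hcsub]
    ring
  -- positivity of both sides
  have hbase : (0:ℝ) < ((v:ℝ)-1)/(v:ℝ) := div_pos hw0 hv0
  have hl0 : 0 < lConst v := by
    rw [lConst]
    exact mul_pos (div_pos (Real.exp_pos _) (Real.sqrt_pos.mpr (by positivity))) (pow_pos hbase _)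
  have hA0 : 0 < lConst v * (m : ℝ) ^ (-(1/2 : ℝ)) * (v : ℝ) ^ (v * m) / ((v : ℝ) - 1) ^ ((v - 1) * m) := by
    apply div_pos
    · exact mul_pos (mul_pos hl0 (Real.rpow_pos_of_pos hm0 _)) (pow_pos hv0 _)
    · exact pow_pos hw0 _
  have hC0 : (0:ℝ) < ((m * v).choose m : ℝ) := by
    exact_mod_cast Nat.choose_pos hmv
  rw [← Real.log_lt_log_iff hA0 hC0]
  -- expand log of LHS
  have hmne : (m:ℝ) ^ (-(1/2 : ℝ)) ≠ 0 := (Real.rpow_pos_of_pos hm0 _).ne'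
  have hvpne : ((v:ℝ)) ^ (v*m) ≠ 0 := (pow_pos hv0 _).ne'
  have hwpne : ((v:ℝ)-1) ^ ((v-1)*m) ≠ 0 := (pow_pos hw0 _).ne'
  rw [Real.log_div (by positivity) hwpne, Real.log_mul (by positivity) hvpne,
      Real.log_mul hl0.ne' hmne]
  rw [Real.log_rpow hm0, Real.log_pow, Real.log_pow]
  have hlconst : Real.log (lConst v) =
      15/16 - (Real.log 2 + Real.log π)/2 + ((v:ℝ)-1) * (Real.log ((v:ℝ)-1) - Real.log (v:ℝ)) := by
    rw [lConst, Real.log_mul (by positivity) (pow_pos hbase _).ne', Real.log_div (Real.exp_pos _).ne' (Real.sqrt_pos.mpr (by positivity)).ne', Real.log_exp, Real.log_pow, Real.log_sqrt (by positivity), Real.log_mul two_ne_zero pi_pos.ne', Real.log_div hw0.ne' hv0.ne', hcsub]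
    try ring
  rw [hlconst]
  -- expand log of RHS
  have hfne : ∀ k : ℕ, ((k.factorial : ℕ) : ℝ) ≠ 0 := fun k => by
    exact_mod_cast (Nat.factorial_pos k).ne'
  have hchoose : ((m * v).choose m : ℝ) = ((m*v).factorial : ℝ) / ((m.factorial : ℝ) * (b.factorial : ℝ)) := by
    rw [Nat.cast_choose ℝ hmv, hsubb]
  rw [hchoose, Real.log_div (hfne _) (by exact mul_ne_zero (hfne _) (hfne _)),
    Real.log_mul (hfne m) (hfne b)]
  -- factorial bounds
  have F1 := log_factorial_ge hn1
  have F2 := log_factorial_le hm1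
  have F3 := log_factorial_le hb1
  rw [hc1] at F1
  rw [hc2] at F3
  have key := key_ineq v m hv hm
  -- log expansions
  have e1 : Real.log (2*((m:ℝ)*(v:ℝ))) = Real.log 2 + Real.log (m:ℝ) + Real.log (v:ℝ) := by
    rw [Real.log_mul two_ne_zero (by positivity), Real.log_mul hm0.ne' hv0.ne']
    ring
  have e2 : Real.log ((m:ℝ)*(v:ℝ)/Real.exp 1) = Real.log (m:ℝ) + Real.log (v:ℝ) - 1 := by
    rw [Real.log_div (by positivity) (Real.exp_ne_zero 1), Real.log_exp, Real.log_mul hm0.ne' hv0.ne']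
  have e3 : Real.log (2*(m:ℝ)) = Real.log 2 + Real.log (m:ℝ) := Real.log_mul two_ne_zero hm0.ne'
  have e4 : Real.log ((m:ℝ)/Real.exp 1) = Real.log (m:ℝ) - 1 := by
    rw [Real.log_div hm0.ne' (Real.exp_ne_zero 1), Real.log_exp]
  have e5 : Real.log (2*(((v:ℝ)-1)*(m:ℝ))) = Real.log 2 + Real.log ((v:ℝ)-1) + Real.log (m:ℝ) := by
    rw [Real.log_mul two_ne_zero (by positivity), Real.log_mul hw0.ne' hm0.ne']
    ring
  have e6 : Real.log ((((v:ℝ)-1)*(m:ℝ))/Real.exp 1) = Real.log ((v:ℝ)-1) + Real.log (m:ℝ) - 1 := by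
    rw [Real.log_div (by positivity) (Real.exp_ne_zero 1), Real.log_exp, Real.log_mul hw0.ne' hm0.ne']
  have e8 : Real.log (Real.sqrt π) = Real.log π / 2 := Real.log_sqrt pi_pos.le
  rw [e1, e2] at F1
  rw [e3, e4] at F2
  rw [e5, e6] at F3
  rw [e8] at F1 F2 F3
  -- final exponent casts
  push_cast [hcsub]
  linarith [F1, F2, F3, key]
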